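/- Let (R, m, k) be a one-dimensional Cohen–Macaulay local ring with infinite residue field admitting a canonical module ω_R with R ⊆ ω_R ⊆ R̄. If R is not Gorenstein and α ∈ m satisfies α m = m², then (R:ω_R):m = { m/α : m ∈ R:ω_R } (as subsets of Q(R)). -/

import Mathlib

/- Common definitions: fractional ideals in the total ring of fractions, canonical
ideals (via the Herzog–Kunz criterion), reductions, (almost) canonical ideals and
(almost) Gorenstein rings, for one-dimensional Cohen–Macaulay rings.
Throughout, the total ring of fractions `Q(R)` is `FractionRing R` and fractional
ideals are submodules of it. -/

set_option maxHeartbeats 1600000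
set_option synthInstance.maxHeartbeats 800000

noncomputable section

open IsLocalRing Submodule

variable (T A : Type*) [CommRing T] [CommRing A] [Algebra T A]

/-- The submodule of the `T`-algebra `A` generated by the image of an ideal of `T`. -/
def idealSub (I : Ideal T) : Submodule T A := Submodule.map (Algebra.linearMap T A) I

/-- The maximal ideal of the local ring `T`, viewed inside `A`. -/
def maxSub [IsLocalRing T] : Submodule T A := idealSub T A (maximalIdeal T)

/-- The Jacobson radical of `T`, viewed inside `A`. -/
def jacSub : Submodule T A := Submodule.map (Algebra.linearMap T A) ((⊥ : Ideal T).jacobson)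

/-- The integral closure of `T` in `A`, as a submodule of `A`. -/
def intCl : Submodule T A := Subalgebra.toSubmodule (integralClosure T A)

/-- `I` is a fractional ideal of `T` inside `A` (`A` playing the role of the total ring
of fractions of `T`): `I` contains an invertible element and has bounded denominators. -/
def IsFracIdeal (I : Submodule T A) : Prop :=
  (∃ u : Aˣ, (u : A) ∈ I) ∧ ∃ r ∈ nonZeroDivisors T, ∀ x ∈ I, r • x ∈ (1 : Submodule T A)

/-- The length `ℓ_T(N/I)` of the subquotient `N/(I ∩ N)`, defined as the Krull dimension
of its lattice of submodules. -/
def relLength (I N : Submodule T A) : WithBot ℕ∞ :=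
  Order.krullDim (Submodule T (↥N ⧸ (I.comap N.subtype)))

/-- Herzog–Kunz criterion: a fractional ideal `ω` of `T` is a canonical module of `T` iff
`ℓ_T((ω : n)/ω) = 1` for every maximal ideal `n` of `T`. -/
def IsCanonicalIdeal (ω : Submodule T A) : Prop :=
  IsFracIdeal T A ω ∧ ∀ n : Ideal T, n.IsMaximal → relLength T A ω (ω / idealSub T A n) = 1

/-- `z ∈ J` is a reduction of the fractional ideal `J`: `z J^n = J^{n+1}` for some `n`. -/
def IsReductionOf (z : A) (J : Submodule T A) : Prop :=
  z ∈ J ∧ ∃ n : ℕ, J ^ (n + 1) = span T {z} * J ^ n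

/-- Almost canonical ideal over a local ring `T` (with respect to a canonical module `ω`,
`T ⊆ ω ⊆ T̄`): for a (regular) reduction `z` of `ω : I` one has `ω : (m:m) ⊆ zI`. -/
def IsAlmostCanonicalLoc [IsLocalRing T] (ω I : Submodule T A) : Prop :=
  ∃ z : A, IsUnit z ∧ IsReductionOf T A z (ω / I) ∧
    ω / (maxSub T A / maxSub T A) ≤ span T {z} * I

/-- The `Localization p`-algebra structure on `LocalizedModule p A` (a global instance,
`LocalizedModule.algebra`, in older Mathlib). -/
abbrev localizedModuleAlgebraOld (p : Submonoid T) :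
    Algebra (Localization p) (LocalizedModule p A) :=
  Algebra.ofModule (fun r x y => by
      induction r using OreLocalization.ind with | _ r s => ?_
      induction x using OreLocalization.ind with | _ a t => ?_
      induction y using OreLocalization.ind with | _ b u => ?_
      change (Localization.mk r s • LocalizedModule.mk a t) * LocalizedModule.mk b u =
        Localization.mk r s • (LocalizedModule.mk a t * LocalizedModule.mk b u)
      rw [LocalizedModule.mk_smul_mk, LocalizedModule.mk_mul_mk, LocalizedModule.mk_mul_mk,
        LocalizedModule.mk_smul_mk, smul_mul_assoc, mul_assoc])
    (fun r x y => by
      induction r using OreLocalization.ind with | _ r s => ?_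
      induction x using OreLocalization.ind with | _ a t => ?_
      induction y using OreLocalization.ind with | _ b u => ?_
      change LocalizedModule.mk a t * (Localization.mk r s • LocalizedModule.mk b u) =
        Localization.mk r s • (LocalizedModule.mk a t * LocalizedModule.mk b u)
      rw [LocalizedModule.mk_smul_mk, LocalizedModule.mk_mul_mk, LocalizedModule.mk_mul_mk,
        LocalizedModule.mk_smul_mk, mul_smul_comm, mul_left_comm])

/-- Almost canonical ideal over a (not necessarily local) ring: the localization at every
maximal ideal is an almost canonical ideal of the localized ring. -/
def IsAlmostCanonical (ω I : Submodule T A) : Prop :=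
  ∀ (p : Ideal T) (hp : p.IsMaximal),
    letI := hp.isPrime
    letI := localizedModuleAlgebraOld T A p.primeCompl
    IsAlmostCanonicalLoc (Localization.AtPrime p) (LocalizedModule p.primeCompl A)
      (ω.localized p.primeCompl) (I.localized p.primeCompl)

/-- `S` is a discrete valuation ring. -/
def IsDVR (S : Type*) [CommRing S] : Prop :=
  ∃ h : IsDomain S, @IsDiscreteValuationRing S _ h

/-- A one-dimensional Cohen–Macaulay local ring `S` is almost Gorenstein if `m ω ⊆ m`
for a canonical module `S ⊆ ω ⊆ S̄` of `S`. -/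
def IsAlmostGorensteinLoc (S : Type*) [CommRing S] [IsLocalRing S] : Prop :=
  ∃ ω : Submodule S (FractionRing S),
    IsCanonicalIdeal S (FractionRing S) ω ∧ 1 ≤ ω ∧
      ω ≤ intCl S (FractionRing S) ∧
      maxSub S (FractionRing S) * ω ≤ maxSub S (FractionRing S)

/-- A ring is almost Gorenstein if its localization at every maximal ideal is. -/
def IsAlmostGorenstein (S : Type*) [CommRing S] : Prop :=
  ∀ (p : Ideal S) (hp : p.IsMaximal),
    letI := hp.isPrime
    IsAlmostGorensteinLoc (Localization.AtPrime p)

/-- A minimal system of generators of the maximal ideal of a local ring. -/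
def IsMinGenSys (S : Type*) [CommRing S] [IsLocalRing S] {n : ℕ} (g : Fin n → S) : Prop :=
  Ideal.span (Set.range g) = maximalIdeal S ∧
    ∀ i : Fin n, Ideal.span (g '' {j | j ≠ i}) ≠ maximalIdeal S

/-- `R` is a generalized almost Gorenstein local (gAGL) ring, with respect to the
canonical module `ω` and the ring `B = m:m`: `m ω J(B) ⊆ R`. -/
def IsGAGL (R : Type*) [CommRing R] [IsLocalRing R] (ω : Submodule R (FractionRing R))
    (B : Subalgebra R (FractionRing R)) : Prop :=
  maxSub R (FractionRing R) * ω *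
      ((jacSub ↥B (FractionRing R)).restrictScalars R) ≤ 1

/-- `1` is a reduction of the localization `J_p` of the fractional ideal `J` at the
submonoid `p` (for `p` the complement of a maximal ideal, this is the localization of
`J` at that maximal ideal): `1 ∈ J_p` and `(J_p)^{n+1} = (J_p)^n` for some `n`. -/
def IsOneReductionOfLocalization (p : Submonoid T) (J : Submodule T A) : Prop :=
  letI := localizedModuleAlgebraOld T A p
  (1 : LocalizedModule p A) ∈ J.localized p ∧
    ∃ n : ℕ, (J.localized p) ^ (n + 1) = (J.localized p) ^ n

/-- Lemma `R:omega^2`(2): if `R` is not Gorenstein and `α m = m²`, then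
`(R:ω):m = { m/α : m ∈ R:ω }`. -/
theorem stmt9 (R : Type*) [CommRing R] [IsLocalRing R] [IsNoetherianRing R]
    (hdim : ringKrullDim R = 1)
    (hCM : ∃ x ∈ maximalIdeal R, x ∈ nonZeroDivisors R)
    (hres : Infinite (ResidueField R))
    (ω : Submodule R (FractionRing R))
    (hω : IsCanonicalIdeal R (FractionRing R) ω) (hω1 : 1 ≤ ω)
    (hω2 : ω ≤ intCl R (FractionRing R))
    (hnotGor : ω ≠ 1)
    (α : R) (hα : α ∈ maximalIdeal R)
    (hmin : Ideal.span {α} * maximalIdeal R = maximalIdeal R ^ 2) :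
    ((((1 : Submodule R (FractionRing R)) / ω) / maxSub R (FractionRing R) :
        Submodule R (FractionRing R)) : Set (FractionRing R)) =
      {x : FractionRing R |
        algebraMap R (FractionRing R) α * x ∈ (1 : Submodule R (FractionRing R)) / ω} := by
  classical
  set Q := FractionRing R with hQ
  set φ := algebraMap R (FractionRing R) with hφ
  have hinj : Function.Injective φ := IsFractionRing.injective R (FractionRing R)
  -- α is a nonzerodivisor
  obtain ⟨x0, hx0m, hx0reg⟩ := hCM
  have hx2 : x0 * x0 ∈ Ideal.span {α} * maximalIdeal R := by
    rw [hmin, pow_two]; exact Ideal.mul_mem_mul hx0m hx0m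
  obtain ⟨t0, -, ht0⟩ := Ideal.mem_span_singleton_mul.mp hx2
  have hαreg : α ∈ nonZeroDivisors R := by
    rw [mem_nonZeroDivisors_iff_right] at hx0reg ⊢
    intro r hr
    have h1 : r * (x0 * x0) = 0 := by
      rw [← ht0, show r * (α * t0) = r * α * t0 by ring, hr, zero_mul]
    have h2 : r * x0 * x0 = 0 := by rw [mul_assoc]; exact h1
    exact hx0reg r (hx0reg (r * x0) h2)
  have hαunit : IsUnit (φ α) :=
    IsLocalization.map_units (M := nonZeroDivisors R) (FractionRing R) ⟨α, hαreg⟩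
  -- key sublemma: K·ω ⊆ m (inside Q)
  have hKω : ∀ k ∈ (1 : Submodule R (FractionRing R)) / ω, ∀ w ∈ ω,
      k * w ∈ maxSub R (FractionRing R) := by
    intro k hk w hw
    have h1 : k * w ∈ (1 : Submodule R (FractionRing R)) :=
      Submodule.mem_div_iff_forall_mul_mem.mp hk w hw
    obtain ⟨r, hr⟩ := Submodule.mem_one.mp h1
    by_cases hru : IsUnit r
    · exfalso
      obtain ⟨u, rfl⟩ := hru
      set k' : FractionRing R := ((↑u⁻¹ : R)) • k with hk'def
      have hk' : k' ∈ (1 : Submodule R (FractionRing R)) / ω :=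
        Submodule.smul_mem _ _ hk
      have hk'w : k' * w = 1 := by
        rw [hk'def, smul_mul_assoc, ← hr, Algebra.smul_def, ← map_mul, Units.inv_mul, map_one]
      -- k' ∈ range φ
      have h1' : k' ∈ (1 : Submodule R (FractionRing R)) := by
        have := Submodule.mem_div_iff_forall_mul_mem.mp hk' 1 (hω1 (Submodule.one_le.mp le_rfl))
        rwa [mul_one] at this
      obtain ⟨s₀, hs₀⟩ := Submodule.mem_one.mp h1'
      have hws : w * φ s₀ = 1 := by rw [hs₀, mul_comm]; exact hk'w
      -- w is integral over R
      have hwint : IsIntegral R w := (Subalgebra.mem_toSubmodule _).mp (hω2 hw)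
      -- hence w ∈ range φ
      have hwrange : ∃ c : R, φ c = w := by
        obtain ⟨p, pm, hp⟩ := hwint
        set n := p.natDegree with hn
        have hn1 : 1 ≤ n := by
          by_contra h
          push_neg at h
          have hn0 : n = 0 := by omega
          have : p = 1 := pm.natDegree_eq_zero.mp hn0
          rw [this] at hp
          simp only [Polynomial.eval₂_one] at hp
          exact one_ne_zero (hinj (by rw [map_one, map_zero]; exact hp))
        have hsum : (∑ i ∈ Finset.range (n + 1), φ (p.coeff i) * w ^ i) = 0 := by
          rw [← Polynomial.eval₂_eq_sum_range]; exact hp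
        have key : ∀ i : ℕ, i < n → w ^ i * (φ s₀) ^ (n - 1) = (φ s₀) ^ (n - 1 - i) := by
          intro i hi
          have hsplit : n - 1 = i + (n - 1 - i) := by omega
          rw [hsplit, pow_add, ← mul_assoc, ← mul_pow, hws, one_pow, one_mul]
          congr 1
          omega
        have keyn : w ^ n * (φ s₀) ^ (n - 1) = w := by
          have hwn : w ^ n = w * w ^ (n - 1) := by
            rw [← pow_succ', Nat.sub_add_cancel hn1]
          rw [hwn, mul_assoc, ← mul_pow, hws, one_pow, mul_one]
        have h0 : (∑ i ∈ Finset.range (n + 1), φ (p.coeff i) * w ^ i) * (φ s₀) ^ (n - 1)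
            = 0 := by rw [hsum, zero_mul]
        rw [Finset.sum_mul, Finset.sum_range_succ] at h0
        have e1 : ∀ i ∈ Finset.range n,
            φ (p.coeff i) * w ^ i * (φ s₀) ^ (n - 1) = φ (p.coeff i * s₀ ^ (n - 1 - i)) := by
          intro i hi
          rw [mul_assoc, key i (Finset.mem_range.mp hi), map_mul, map_pow]
        rw [Finset.sum_congr rfl e1] at h0
        have e2 : φ (p.coeff n) * w ^ n * (φ s₀) ^ (n - 1) = w := by
          rw [hn, pm.coeff_natDegree, map_one, one_mul]
          exact keyn
        rw [e2] at h0
        refine ⟨-∑ i ∈ Finset.range n, p.coeff i * s₀ ^ (n - 1 - i), ?_⟩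
        rw [map_neg, map_sum]
        exact (eq_neg_of_add_eq_zero_right h0).symm
      obtain ⟨c, hc⟩ := hwrange
      have hωle : ω ≤ 1 := by
        intro w' hw'
        have h2 : k' * w' ∈ (1 : Submodule R (FractionRing R)) :=
          Submodule.mem_div_iff_forall_mul_mem.mp hk' w' hw'
        obtain ⟨s, hs⟩ := Submodule.mem_one.mp h2
        refine Submodule.mem_one.mpr ⟨c * s, ?_⟩
        rw [map_mul, hc, hs, ← mul_assoc, mul_comm w k', hk'w, one_mul]
      exact hnotGor (le_antisymm hωle hω1)
    · refine Submodule.mem_map.mpr ⟨r, ?_, by simpa using hr⟩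
      exact (IsLocalRing.mem_maximalIdeal r).mpr hru
  -- main argument
  ext x
  simp only [SetLike.mem_coe, Set.mem_setOf_eq]
  constructor
  · intro hx
    have hαM : φ α ∈ maxSub R (FractionRing R) :=
      Submodule.mem_map.mpr ⟨α, hα, rfl⟩
    have := Submodule.mem_div_iff_forall_mul_mem.mp hx _ hαM
    rwa [mul_comm] at this
  · intro hx
    rw [Submodule.mem_div_iff_forall_mul_mem]
    intro y hy
    obtain ⟨t, ht, rfl⟩ := Submodule.mem_map.mp hy
    rw [Submodule.mem_div_iff_forall_mul_mem]
    intro w hw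
    have hs : (φ α * x) * w ∈ maxSub R (FractionRing R) := hKω _ hx w hw
    obtain ⟨s, hsm, hseq⟩ := Submodule.mem_map.mp hs
    have hts : t * s ∈ Ideal.span {α} * maximalIdeal R := by
      rw [hmin, pow_two]; exact Ideal.mul_mem_mul ht hsm
    obtain ⟨t', -, heq⟩ := Ideal.mem_span_singleton_mul.mp hts
    have hcalc : φ α * (x * Algebra.linearMap R (FractionRing R) t * w) = φ α * φ t' := by
      have h1 : Algebra.linearMap R (FractionRing R) t = φ t := rfl
      have h2 : (φ s : FractionRing R) = (φ α * x) * w := by simpa using hseq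
      rw [h1, ← map_mul, heq, map_mul]
      calc φ α * (x * φ t * w) = φ t * ((φ α * x) * w) := by ring
        _ = φ t * φ s := by rw [h2]
        _ = φ t * φ s := rfl
    have hfin : x * Algebra.linearMap R (FractionRing R) t * w = φ t' :=
      hαunit.mul_left_cancel hcalc
    exact Submodule.mem_one.mpr ⟨t', hfin.symm⟩
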